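/- Let p be an odd prime and α_0, ..., α_{n-1} a set of n-th roots of a in ℤ_{p^e} with pairwise invertible differences, where n is a power of 2 dividing p - 1. Then after some reordering the set is an (α,ω)-set: there exist an n-th root α of a and a root of unity ω of order n such that the reordered set is {α·ω^i : 0 ≤ i < n}. -/

import Mathlib

lemma aux_isUnit_of_cast {p : ℕ} (hp : p.Prime) {e : ℕ} (he : 1 ≤ e)
    (x : ZMod (p ^ e)) (h : IsUnit (ZMod.castHom (dvd_pow_self p (Nat.one_le_iff_ne_zero.mp he)) (ZMod p) x)) :
    IsUnit x := by
  haveI : Fact p.Prime := ⟨hp⟩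
  haveI : NeZero (p ^ e) := ⟨pow_ne_zero _ hp.pos.ne'⟩
  have hx : ((x.val : ℕ) : ZMod (p ^ e)) = x := ZMod.natCast_rightInverse x
  have hc : (ZMod.castHom (dvd_pow_self p (Nat.one_le_iff_ne_zero.mp he)) (ZMod p) x)
      = ((x.val : ℕ) : ZMod p) := by
    rw [ZMod.castHom_apply, ← ZMod.natCast_val]
  rw [hc, ZMod.isUnit_iff_coprime] at h
  rw [← hx, ZMod.isUnit_iff_coprime]
  exact Nat.Coprime.pow_right _ h

lemma aux_unique {p : ℕ} (hp : p.Prime) {e : ℕ} (he : 1 ≤ e) {n : ℕ}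
    (hpn : ¬ p ∣ n) {x y : ZMod (p ^ e)} (hx : IsUnit x)
    (hxy : x ^ n = y ^ n)
    (hc : ZMod.castHom (dvd_pow_self p (Nat.one_le_iff_ne_zero.mp he)) (ZMod p) x
        = ZMod.castHom (dvd_pow_self p (Nat.one_le_iff_ne_zero.mp he)) (ZMod p) y) :
    x = y := by
  haveI : Fact p.Prime := ⟨hp⟩
  set c := ZMod.castHom (dvd_pow_self p (Nat.one_le_iff_ne_zero.mp he)) (ZMod p) with hcdef
  set S : ZMod (p ^ e) := ∑ i ∈ Finset.range n, x ^ i * y ^ (n - 1 - i) with hS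
  have hfact : S * (x - y) = x ^ n - y ^ n := geom_sum₂_mul x y n
  have hz : S * (x - y) = 0 := by rw [hfact, hxy, sub_self]
  have hcS : c S = (n : ZMod p) * (c x) ^ (n - 1) := by
    rw [hS, map_sum]
    have : ∀ i ∈ Finset.range n, c (x ^ i * y ^ (n - 1 - i)) = (c x) ^ (n - 1) := by
      intro i hi
      rw [map_mul, map_pow, map_pow, ← hc, ← pow_add]
      congr 1
      have := Finset.mem_range.mp hi
      omega
    rw [Finset.sum_congr rfl this, Finset.sum_const, Finset.card_range, nsmul_eq_mul]
  have hSu : IsUnit S := by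
    apply aux_isUnit_of_cast hp he
    rw [← hcdef, hcS]
    apply IsUnit.mul
    · have : (n : ZMod p) ≠ 0 := by
        rw [Ne, ZMod.natCast_eq_zero_iff]
        exact fun h => hpn h
      exact isUnit_iff_ne_zero.mpr this
    · exact (hx.map c).pow _
  have h0 : x - y = 0 := hSu.mul_right_eq_zero.mp hz
  exact sub_eq_zero.mp h0

theorem roots_prime_power_are_alphaOmega_set
    {p : ℕ} (hp : p.Prime) (hodd : Odd p) {e : ℕ} (he : 1 ≤ e)
    {t n : ℕ} (hn : n = 2 ^ t) (hnp : n ∣ p - 1)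
    {a : ZMod (p ^ e)} (α : Fin n → ZMod (p ^ e))
    (hroots : ∀ i, α i ^ n = a)
    (hinv : ∀ i j : Fin n, i ≠ j → IsUnit (α i - α j)) :
    ∃ (σ : Equiv.Perm (Fin n)) (β ω : ZMod (p ^ e)),
      β ^ n = a ∧ orderOf ω = n ∧
      (∀ i j : ℕ, i < n → j < n → i ≠ j → IsUnit (ω ^ i - ω ^ j)) ∧
      ∀ i : Fin n, α (σ i) = β * ω ^ (i : ℕ) := by
  haveI : Fact p.Prime := ⟨hp⟩
  have hpe1 : 1 < p ^ e := Nat.one_lt_pow (by omega) hp.one_lt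
  haveI : Fact (1 < p ^ e) := ⟨hpe1⟩
  have hn0 : n ≠ 0 := by rw [hn]; positivity
  haveI : NeZero n := ⟨hn0⟩
  rcases eq_or_lt_of_le (Nat.one_le_iff_ne_zero.mpr hn0) with h1 | h2
  · -- n = 1
    refine ⟨1, α ⟨0, by omega⟩, 1, hroots _, by rw [orderOf_one, h1], ?_, ?_⟩
    · intro i j hi hj hij; omega
    · intro i
      have : i = ⟨0, by omega⟩ := by ext; omega
      rw [Equiv.Perm.one_apply, this, one_pow, mul_one]
  · -- n ≥ 2
    set c := ZMod.castHom (dvd_pow_self p (Nat.one_le_iff_ne_zero.mp he)) (ZMod p) with hcdef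
    have hpn : ¬ p ∣ n := by
      rw [hn]
      intro h
      have h2' := hp.dvd_of_dvd_pow h
      have := (Nat.prime_dvd_prime_iff_eq hp Nat.prime_two).mp h2'
      obtain ⟨k, hk⟩ := hodd; omega
    have key : ∀ x : ZMod (p ^ e), IsUnit x ↔ c x ≠ 0 := by
      intro x
      constructor
      · intro h h0
        have := h.map c
        rw [h0] at this
        exact not_isUnit_zero this
      · intro h
        exact aux_isUnit_of_cast hp he x (isUnit_iff_ne_zero.mpr h)
    set i0 : Fin n := ⟨0, by omega⟩ with hi0
    set i1 : Fin n := ⟨1, h2⟩ with hi1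
    have hu0 : IsUnit (α i0) := by
      by_contra h0
      rw [key] at h0
      have hc0 : c (α i0) = 0 := not_not.mp h0
      have hca : c a = 0 := by rw [← hroots i0, map_pow, hc0, zero_pow hn0]
      have hc1 : c (α i1) = 0 := by
        have : c (α i1) ^ n = 0 := by rw [← map_pow, hroots i1, hca]
        exact (pow_eq_zero_iff hn0).mp this
      have hd := hinv i1 i0 (by simp [hi0, hi1, Fin.ext_iff])
      rw [key] at hd
      exact hd (by rw [map_sub, hc1, hc0, sub_zero])
    have hu : ∀ i, IsUnit (α i) := by
      intro i
      rw [key]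
      intro h
      have hca : c a = 0 := by rw [← hroots i, map_pow, h, zero_pow hn0]
      have h0 : c (α i0) ^ n = 0 := by rw [← map_pow, hroots i0, hca]
      exact (key _).mp hu0 ((pow_eq_zero_iff hn0).mp h0)
    set u : Fin n → (ZMod (p ^ e))ˣ := fun i => (hu i).unit with hudef
    have hucoe : ∀ i, (u i : ZMod (p ^ e)) = α i := fun i => (hu i).unit_spec
    set w : Fin n → (ZMod (p ^ e))ˣ := fun i => u i * (u i0)⁻¹ with hwdef
    have hupow : ∀ i, (u i) ^ n = (u i0) ^ n := by
      intro i
      ext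
      rw [Units.val_pow_eq_pow_val, Units.val_pow_eq_pow_val, hucoe, hucoe, hroots, hroots]
    have hwpow : ∀ i, w i ^ n = 1 := by
      intro i
      rw [hwdef]
      simp only [mul_pow, inv_pow, hupow i, mul_inv_cancel]
    set W : Fin n → rootsOfUnity n (ZMod (p ^ e)) := fun i => ⟨w i, (mem_rootsOfUnity n _).mpr (hwpow i)⟩
      with hWdef
    have hWinj : Function.Injective W := by
      intro i j hij
      by_contra hne
      have hww : w i = w j := congrArg Subtype.val hij
      have huu : u i = u j := mul_left_injective _ hww
      have hαα : α i = α j := by rw [← hucoe, ← hucoe, huu]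
      have h0 : α i - α j = 0 := by rw [hαα, sub_self]
      exact not_isUnit_zero (h0 ▸ hinv i j hne)
    haveI : Fintype (rootsOfUnity n (ZMod (p ^ e))) := Fintype.ofFinite _
    have hcard1 : n ≤ Nat.card (rootsOfUnity n (ZMod (p ^ e))) := by
      have := Nat.card_le_card_of_injective W hWinj
      simpa using this
    set ψ : rootsOfUnity n (ZMod (p ^ e)) →* rootsOfUnity n (ZMod p) := restrictRootsOfUnity c n with hψdef
    have hψcoe : ∀ x : rootsOfUnity n (ZMod (p ^ e)), (((ψ x : (ZMod p)ˣ)) : ZMod p) = c (((x : (ZMod (p ^ e))ˣ)) : ZMod (p ^ e)) := by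
      intro x
      rw [hψdef]
      rw [restrictRootsOfUnity_coe_apply]
    have hψinj : Function.Injective ψ := by
      intro x y hxy
      have h1 : (((x : (ZMod (p ^ e))ˣ)) : ZMod (p ^ e)) ^ n = (((y : (ZMod (p ^ e))ˣ)) : ZMod (p ^ e)) ^ n := by
        rw [(mem_rootsOfUnity' n _).mp x.2, (mem_rootsOfUnity' n _).mp y.2]
      have h2 : c (((x : (ZMod (p ^ e))ˣ)) : ZMod (p ^ e)) = c (((y : (ZMod (p ^ e))ˣ)) : ZMod (p ^ e)) := by
        rw [← hψcoe, ← hψcoe, hxy]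
      have := aux_unique hp he hpn ((x : (ZMod (p ^ e))ˣ)).isUnit h1 h2
      exact Subtype.ext (Units.ext this)
    have hcard2 : Nat.card (rootsOfUnity n (ZMod (p ^ e))) ≤ Nat.card (rootsOfUnity n (ZMod p)) :=
      Nat.card_le_card_of_injective ψ hψinj
    have hcard3 : Nat.card (rootsOfUnity n (ZMod p)) ≤ n := by
      exact card_rootsOfUnity (R := ZMod p) (k := n)
    have hcR : Nat.card (rootsOfUnity n (ZMod (p ^ e))) = n := le_antisymm (hcard2.trans hcard3) hcard1
    have hcF : Nat.card (rootsOfUnity n (ZMod p)) = n :=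
      le_antisymm hcard3 (hcard1.trans hcard2)
    have hψbij : Function.Bijective ψ := by
      haveI : Fintype (rootsOfUnity n (ZMod p)) := Fintype.ofFinite _
      rw [Fintype.bijective_iff_injective_and_card]
      refine ⟨hψinj, ?_⟩
      rw [← Nat.card_eq_fintype_card, ← Nat.card_eq_fintype_card, hcR, hcF]
    obtain ⟨g, hg⟩ := IsCyclic.exists_generator (α := rootsOfUnity n (ZMod p))
    obtain ⟨gh, hgh⟩ := hψbij.surjective g
    have hgen : ∀ x : rootsOfUnity n (ZMod (p ^ e)), x ∈ Subgroup.zpowers gh := by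
      intro x
      obtain ⟨m, hm⟩ := Subgroup.mem_zpowers_iff.mp (hg (ψ x))
      exact Subgroup.mem_zpowers_iff.mpr ⟨m, hψinj (by rw [map_zpow, hgh, hm])⟩
    have hord : orderOf gh = n := by
      rw [orderOf_eq_card_of_forall_mem_zpowers hgen, hcR]
    set ω : ZMod (p ^ e) := (((gh : (ZMod (p ^ e))ˣ)) : ZMod (p ^ e)) with hωdef
    have hordω : orderOf ω = n := by
      rw [hωdef, orderOf_units]
      have : ((gh : (ZMod (p ^ e))ˣ)) = (rootsOfUnity n (ZMod (p ^ e))).subtype gh := rfl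
      rw [this, orderOf_injective _ Subtype.coe_injective, hord]
    have hfin : ∀ i, ∃ k : ℕ, k < n ∧ gh ^ k = W i := by
      intro i
      have h1 := hgen (W i)
      have hfo : IsOfFinOrder gh := isOfFinOrder_of_finite gh
      obtain ⟨m, hm⟩ := hfo.mem_powers_iff_mem_zpowers.mpr h1
      refine ⟨m % n, Nat.mod_lt _ (Nat.pos_of_ne_zero hn0), ?_⟩
      calc gh ^ (m % n) = gh ^ (m % orderOf gh) := by rw [hord]
        _ = gh ^ m := pow_mod_orderOf gh m
        _ = W i := hm
    set f : Fin n → Fin n := fun i => ⟨(hfin i).choose, (hfin i).choose_spec.1⟩ with hfdef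
    have hv : α i0 * ↑(u i0)⁻¹ = 1 := by
      rw [← hucoe i0]
      exact Units.mul_inv _
    have hf : ∀ i, α i = α i0 * ω ^ ((f i : ℕ)) := by
      intro i
      have h := (hfin i).choose_spec.2
      have hcoe : ω ^ ((f i : ℕ)) = α i * ↑(u i0)⁻¹ := by
        have h2 := congrArg (fun z : rootsOfUnity n (ZMod (p ^ e)) => (((z : (ZMod (p ^ e))ˣ)) : ZMod (p ^ e))) h
        simp only [hWdef, hwdef] at h2
        rw [hωdef]
        push_cast at h2 ⊢
        rw [h2, hucoe]
      calc α i = α i * (α i0 * ↑(u i0)⁻¹) := by rw [hv, mul_one]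
      _ = α i0 * (α i * ↑(u i0)⁻¹) := by ring
      _ = α i0 * ω ^ ((f i : ℕ)) := by rw [← hcoe]
    have hfinj : Function.Injective f := by
      intro i j hij
      by_contra hne
      have : α i - α j = 0 := by rw [hf i, hf j, hij, sub_self]
      exact not_isUnit_zero (this ▸ hinv i j hne)
    have hfbij : Function.Bijective f := Finite.injective_iff_bijective.mp hfinj
    set σ : Equiv.Perm (Fin n) := (Equiv.ofBijective f hfbij).symm with hσdef
    have hσ : ∀ i, f (σ i) = i := fun i => (Equiv.ofBijective f hfbij).apply_symm_apply i
    refine ⟨σ, α i0, ω, hroots i0, hordω, ?_, ?_⟩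
    · intro i j hi hj hij
      have e1 : ∀ (k : ℕ) (hk : k < n), ω ^ k = ↑(u i0)⁻¹ * α (σ ⟨k, hk⟩) := by
        intro k hk
        rw [hf (σ ⟨k, hk⟩), hσ]
        rw [← mul_assoc, mul_comm (↑(u i0)⁻¹ : ZMod (p ^ e)) (α i0), hv, one_mul]
      have hne : σ ⟨i, hi⟩ ≠ σ ⟨j, hj⟩ := by
        intro h
        exact hij (by simpa [Fin.ext_iff] using σ.injective h)
      rw [e1 i hi, e1 j hj, ← mul_sub]
      exact ((u i0)⁻¹.isUnit).mul (hinv _ _ hne)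
    · intro i
      rw [hf (σ i), hσ i]
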